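/- Let X be an essentially bounded random variable, ε > 0, and let A ⊂ ℝ be either a compact set or an interval. Define A_ε := {x ∈ ℝ : |x − y| ≤ ε for some y ∈ A}. Then A_ε is a Borel set and sup{ℙ(Y ∈ A) : Y essentially bounded, ‖Y − X‖_∞ ≤ ε} = ℙ(X ∈ A_ε); moreover this supremum is attained. -/

import Mathlib

open MeasureTheory Filter
open scoped ENNReal Topology Classical

noncomputable def VaR {Ω : Type*} [MeasurableSpace Ω] (P : Measure Ω) (p : ℝ) (Y : Ω → ℝ) : ℝ :=
  sInf {x : ℝ | p ≤ (P {ω | Y ω ≤ x}).toReal}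

noncomputable def ES {Ω : Type*} [MeasurableSpace Ω] (P : Measure Ω) (p : ℝ) (Y : Ω → ℝ) : ℝ :=
  (1 - p)⁻¹ * ∫ u in p..(1 : ℝ), VaR P u Y

/-- The probability space is atomless. -/
def Atomless {Ω : Type*} [MeasurableSpace Ω] (P : Measure Ω) : Prop :=
  ∀ s : Set Ω, MeasurableSet s → 0 < P s →
    ∃ t, t ⊆ s ∧ MeasurableSet t ∧ 0 < P t ∧ P t < P s

/-- The (topological) support of a measure on ℝ. -/
def msupport (μ : Measure ℝ) : Set ℝ :=
  {x | ∀ ε > 0, 0 < μ (Set.Ioo (x - ε) (x + ε))}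

/-- The distribution `μ` has a density (w.r.t. Lebesgue measure) which is positive
on the support of `μ`. -/
def HasPositiveDensityOnSupport (μ : Measure ℝ) : Prop :=
  ∃ f : ℝ → ℝ, Measurable f ∧
    μ = MeasureTheory.volume.withDensity (fun x => ENNReal.ofReal (f x)) ∧
    ∀ x ∈ msupport μ, 0 < f x

/-- The distribution `μ` has a density (w.r.t. Lebesgue measure) which is decreasing
(and positive) on the support of `μ`. -/
def HasDecreasingDensityOnSupport (μ : Measure ℝ) : Prop :=
  ∃ f : ℝ → ℝ, Measurable f ∧
    μ = MeasureTheory.volume.withDensity (fun x => ENNReal.ofReal (f x)) ∧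
    AntitoneOn f (msupport μ) ∧ ∀ x ∈ msupport μ, 0 < f x

/-- Membership in the admissible set 𝒢_cm (complete market): measurable `g` with
budget constraint `𝔼[γ(X)·g(X)] ≥ x₀`. -/
def memGcm {Ω : Type*} [MeasurableSpace Ω] (P : Measure Ω) (X : Ω → ℝ) (γ : ℝ → ℝ)
    (x₀ : ℝ) (g : ℝ → ℝ) : Prop :=
  Measurable g ∧ Integrable (fun ω => γ (X ω) * g (X ω)) P ∧
    x₀ ≤ ∫ ω, γ (X ω) * g (X ω) ∂P

/-- Membership in the admissible set 𝒢_ns (no short-selling):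
`𝔼[γ(X)·g(X)] ≥ x₀` and `0 ≤ g(X) ≤ X` a.s. -/
def memGns {Ω : Type*} [MeasurableSpace Ω] (P : Measure Ω) (X : Ω → ℝ) (γ : ℝ → ℝ)
    (x₀ : ℝ) (g : ℝ → ℝ) : Prop :=
  Measurable g ∧ Integrable (fun ω => γ (X ω) * g (X ω)) P ∧
    x₀ ≤ ∫ ω, γ (X ω) * g (X ω) ∂P ∧
    (∀ᵐ ω ∂P, 0 ≤ g (X ω) ∧ g (X ω) ≤ X ω)

/-- Membership in the admissible set 𝒢_bd (bounded positions):
`𝔼[γ(X)·g(X)] ≥ x₀` and `0 ≤ g(X) ≤ m` a.s. -/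
def memGbd {Ω : Type*} [MeasurableSpace Ω] (P : Measure Ω) (X : Ω → ℝ) (γ : ℝ → ℝ)
    (x₀ m : ℝ) (g : ℝ → ℝ) : Prop :=
  Measurable g ∧ Integrable (fun ω => γ (X ω) * g (X ω)) P ∧
    x₀ ≤ ∫ ω, γ (X ω) * g (X ω) ∂P ∧
    (∀ᵐ ω ∂P, 0 ≤ g (X ω) ∧ g (X ω) ≤ m)

/-- Key auxiliary lemma: the thickening `A_ε` is measurable, and there is a measurable
map `φ` moving each point by at most `ε` such that `φ x ∈ A ↔ x ∈ A_ε`. -/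
lemma aux_phi_stmt17 (ε : ℝ) (hε : 0 < ε) (A : Set ℝ) (hA : IsCompact A ∨ A.OrdConnected) :
    MeasurableSet {x : ℝ | ∃ y ∈ A, |x - y| ≤ ε} ∧
    ∃ φ : ℝ → ℝ, Measurable φ ∧ (∀ x, |φ x - x| ≤ ε) ∧
      ∀ x, φ x ∈ A ↔ x ∈ {x : ℝ | ∃ y ∈ A, |x - y| ≤ ε} := by
  set Aε := {x : ℝ | ∃ y ∈ A, |x - y| ≤ ε} with hAε_def
  rcases Set.eq_empty_or_nonempty A with hAe | ⟨a₀, ha₀⟩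
  · have hAεe : Aε = (∅ : Set ℝ) := by
      ext x; simp [hAε_def, hAe]
    refine ⟨by rw [hAεe]; exact MeasurableSet.empty, id, measurable_id,
      fun x => by simp [hε.le], fun x => by rw [hAεe]; simp [hAe]⟩
  rcases hA with hc | ho
  · -- compact case
    have hAεeq : Aε = (fun p : ℝ × ℝ => p.1 + p.2) '' (A ×ˢ Set.Icc (-ε) ε) := by
      ext x
      constructor
      · rintro ⟨y, hy, habs⟩
        obtain ⟨ha1, ha2⟩ := abs_le.mp habs
        exact ⟨(y, x - y), ⟨hy, Set.mem_Icc.mpr ⟨ha1, ha2⟩⟩, by ring⟩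
      · rintro ⟨⟨y, t⟩, ⟨hy, ht⟩, rfl⟩
        obtain ⟨ht1, ht2⟩ := Set.mem_Icc.mp ht
        refine ⟨y, hy, abs_le.mpr ⟨?_, ?_⟩⟩
        · show -ε ≤ y + t - y; linarith
        · show y + t - y ≤ ε; linarith
    have hAεcomp : IsCompact Aε := by
      rw [hAεeq]
      exact (hc.prod isCompact_Icc).image continuous_add
    have hAεmeas : MeasurableSet Aε := hAεcomp.isClosed.measurableSet
    set C : Set ℝ := {x : ℝ | ∃ y ∈ A, x ≤ y ∧ y ≤ x + ε} with hC_def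
    have hCeq : C = (fun p : ℝ × ℝ => p.1 + p.2) '' (A ×ˢ Set.Icc (-ε) 0) := by
      ext x
      constructor
      · rintro ⟨y, hy, h1, h2⟩
        exact ⟨(y, x - y), ⟨hy, Set.mem_Icc.mpr ⟨show -ε ≤ x - y by linarith, show x - y ≤ 0 by linarith⟩⟩, by ring⟩
      · rintro ⟨⟨y, t⟩, ⟨hy, ht⟩, rfl⟩
        obtain ⟨ht1, ht2⟩ := Set.mem_Icc.mp ht
        refine ⟨y, hy, ?_, ?_⟩
        · show y + t ≤ y; linarith
        · show y ≤ y + t + ε; linarith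
    have hCmeas : MeasurableSet C := by
      rw [hCeq]
      exact (((hc.prod isCompact_Icc).image continuous_add).isClosed).measurableSet
    have hbb : BddBelow A := hc.bddBelow
    have hba : BddAbove A := hc.bddAbove
    have hMmem : sSup A ∈ A := hc.sSup_mem ⟨a₀, ha₀⟩
    have hmmem : sInf A ∈ A := hc.sInf_mem ⟨a₀, ha₀⟩
    set G₁ : ℝ → ℝ := fun x => sInf (A ∩ Set.Ici (min x (sSup A))) with hG₁
    set G₂ : ℝ → ℝ := fun x => sSup (A ∩ Set.Iic (max x (sInf A))) with hG₂
    have hG₁mono : Monotone G₁ := by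
      intro x x' hxx'
      refine csInf_le_csInf (hbb.mono Set.inter_subset_left)
        ⟨sSup A, hMmem, Set.mem_Ici.mpr (min_le_right _ _)⟩ ?_
      exact Set.inter_subset_inter_right _ (Set.Ici_subset_Ici.mpr (min_le_min hxx' le_rfl))
    have hG₂mono : Monotone G₂ := by
      intro x x' hxx'
      refine csSup_le_csSup (hba.mono Set.inter_subset_left)
        ⟨sInf A, hmmem, Set.mem_Iic.mpr (le_max_right _ _)⟩ ?_
      exact Set.inter_subset_inter_right _ (Set.Iic_subset_Iic.mpr (max_le_max hxx' le_rfl))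
    set φ : ℝ → ℝ := fun x => if x ∈ Aε then (if x ∈ C then G₁ x else G₂ x) else x with hφ
    have hφmeas : Measurable φ :=
      Measurable.ite hAεmeas (Measurable.ite hCmeas hG₁mono.measurable hG₂mono.measurable)
        measurable_id
    have key : ∀ x ∈ Aε, φ x ∈ A ∧ |φ x - x| ≤ ε := by
      intro x hx
      by_cases hxC : x ∈ C
      · obtain ⟨y, hy, hy1, hy2⟩ := hxC
        have hxC' : x ∈ C := ⟨y, hy, hy1, hy2⟩
        have hxM : x ≤ sSup A := le_trans hy1 (le_csSup hba hy)
        have hS : IsCompact (A ∩ Set.Ici x) := hc.inter_right isClosed_Ici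
        have hSne : (A ∩ Set.Ici x).Nonempty := ⟨y, hy, Set.mem_Ici.mpr hy1⟩
        have hmem : sInf (A ∩ Set.Ici x) ∈ A ∩ Set.Ici x := hS.sInf_mem hSne
        have hge : x ≤ sInf (A ∩ Set.Ici x) := Set.mem_Ici.mp hmem.2
        have hle : sInf (A ∩ Set.Ici x) ≤ y :=
          csInf_le (hbb.mono Set.inter_subset_left) ⟨hy, Set.mem_Ici.mpr hy1⟩
        have hφx : φ x = sInf (A ∩ Set.Ici x) := by
          have h1 : φ x = G₁ x := by
            show (if x ∈ Aε then (if x ∈ C then G₁ x else G₂ x) else x) = G₁ x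
            rw [if_pos hx, if_pos hxC']
          rw [h1]
          show sInf (A ∩ Set.Ici (min x (sSup A))) = sInf (A ∩ Set.Ici x)
          rw [min_eq_left hxM]
        rw [hφx]
        exact ⟨hmem.1, abs_le.mpr ⟨by linarith, by linarith⟩⟩
      · have hxAε := hx
        obtain ⟨y, hy, habs⟩ := hx
        obtain ⟨ha1, ha2⟩ := abs_le.mp habs
        have hy1 : y ≤ x := by
          by_contra h
          push_neg at h
          exact hxC ⟨y, hy, h.le, by linarith⟩
        have hy2 : x - ε ≤ y := by linarith
        have hxm : sInf A ≤ x := le_trans (csInf_le hbb hy) hy1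
        have hS : IsCompact (A ∩ Set.Iic x) := hc.inter_right isClosed_Iic
        have hSne : (A ∩ Set.Iic x).Nonempty := ⟨y, hy, Set.mem_Iic.mpr hy1⟩
        have hmem : sSup (A ∩ Set.Iic x) ∈ A ∩ Set.Iic x := hS.sSup_mem hSne
        have hle' : sSup (A ∩ Set.Iic x) ≤ x := Set.mem_Iic.mp hmem.2
        have hle : y ≤ sSup (A ∩ Set.Iic x) :=
          le_csSup (hba.mono Set.inter_subset_left) ⟨hy, Set.mem_Iic.mpr hy1⟩
        have hφx : φ x = sSup (A ∩ Set.Iic x) := by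
          have h1 : φ x = G₂ x := by
            show (if x ∈ Aε then (if x ∈ C then G₁ x else G₂ x) else x) = G₂ x
            rw [if_pos hxAε, if_neg hxC]
          rw [h1]
          show sSup (A ∩ Set.Iic (max x (sInf A))) = sSup (A ∩ Set.Iic x)
          rw [max_eq_left hxm]
        rw [hφx]
        exact ⟨hmem.1, abs_le.mpr ⟨by linarith, by linarith⟩⟩
    refine ⟨hAεmeas, φ, hφmeas, ?_, ?_⟩
    · intro x
      by_cases hx : x ∈ Aε
      · exact (key x hx).2
      · have : φ x = x := by
          show (if x ∈ Aε then (if x ∈ C then G₁ x else G₂ x) else x) = x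
          rw [if_neg hx]
        rw [this]; simpa using hε.le
    · intro x
      constructor
      · intro hφA
        by_contra hx
        have hid : φ x = x := by
          show (if x ∈ Aε then (if x ∈ C then G₁ x else G₂ x) else x) = x
          rw [if_neg hx]
        exact hx ⟨φ x, hφA, by rw [hid]; simpa using hε.le⟩
      · exact fun hx => (key x hx).1
  · -- ord-connected case
    have hAεoc : Aε.OrdConnected := by
      constructor
      rintro x1 ⟨y1, hy1, h1⟩ x2 ⟨y2, hy2, h2⟩ z ⟨hz1, hz2⟩
      obtain ⟨h1a, h1b⟩ := abs_le.mp h1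
      obtain ⟨h2a, h2b⟩ := abs_le.mp h2
      have hmA : min y1 y2 ∈ A := by
        rcases min_cases y1 y2 with ⟨h, _⟩ | ⟨h, _⟩ <;> rw [h] <;> assumption
      have hMA : max y1 y2 ∈ A := by
        rcases max_cases y1 y2 with ⟨h, _⟩ | ⟨h, _⟩ <;> rw [h] <;> assumption
      have hmle : min y1 y2 ≤ z + ε := le_trans (min_le_left _ _) (by linarith)
      have hMge : z - ε ≤ max y1 y2 := le_trans (by linarith) (le_max_right y1 y2)
      refine ⟨max (min y1 y2) (min z (max y1 y2)),
        ho.out hmA hMA ⟨le_max_left _ _, max_le min_le_max (min_le_right _ _)⟩,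
        abs_le.mpr ⟨?_, ?_⟩⟩
      · have h1' : min z (max y1 y2) ≤ z := min_le_left _ _
        have h2' : max (min y1 y2) (min z (max y1 y2)) ≤ z + ε := max_le hmle (by linarith)
        linarith
      · have h1' : z - ε ≤ min z (max y1 y2) := le_min (by linarith) hMge
        have h2' : z - ε ≤ max (min y1 y2) (min z (max y1 y2)) :=
          le_trans h1' (le_max_right _ _)
        linarith
    have hAεmeas : MeasurableSet Aε := hAεoc.measurableSet
    set φ : ℝ → ℝ := fun x =>
      if x ∈ Aε then (if x < a₀ then min a₀ (x + ε) else max a₀ (x - ε)) else x with hφ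
    have hφmeas : Measurable φ := by
      refine Measurable.ite hAεmeas (Measurable.ite (measurableSet_lt measurable_id
        measurable_const) ?_ ?_) measurable_id
      · exact (measurable_const.min (measurable_id.add_const ε))
      · exact (measurable_const.max (measurable_id.sub_const ε))
    have key : ∀ x ∈ Aε, φ x ∈ A ∧ |φ x - x| ≤ ε := by
      intro x hx
      have hxAε := hx
      obtain ⟨yw, hyw, habsw⟩ := hx
      obtain ⟨hwa, hwb⟩ := abs_le.mp habsw
      by_cases hxa : x < a₀
      · have hφx : φ x = min a₀ (x + ε) := by
          show (if x ∈ Aε then (if x < a₀ then min a₀ (x + ε) else max a₀ (x - ε)) else x)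
            = min a₀ (x + ε)
          rw [if_pos hxAε, if_pos hxa]
        constructor
        · rcases le_or_gt a₀ (x + ε) with h | h
          · rw [hφx, min_eq_left h]; exact ha₀
          · rw [hφx, min_eq_right h.le]
            have hyw_le : yw ≤ x + ε := by linarith
            exact ho.out hyw ha₀ ⟨hyw_le, h.le⟩
        · rw [hφx]
          have hgex : x ≤ min a₀ (x + ε) := le_min hxa.le (by linarith)
          have hlex : min a₀ (x + ε) ≤ x + ε := min_le_right _ _
          exact abs_le.mpr ⟨by linarith, by linarith⟩
      · push_neg at hxa
        have hφx : φ x = max a₀ (x - ε) := by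
          show (if x ∈ Aε then (if x < a₀ then min a₀ (x + ε) else max a₀ (x - ε)) else x)
            = max a₀ (x - ε)
          rw [if_pos hxAε, if_neg (not_lt.mpr hxa)]
        constructor
        · rcases le_or_gt (x - ε) a₀ with h | h
          · rw [hφx, max_eq_left h]; exact ha₀
          · rw [hφx, max_eq_right h.le]
            have hyw_ge : x - ε ≤ yw := by linarith
            exact ho.out ha₀ hyw ⟨h.le, hyw_ge⟩
        · rw [hφx]
          have hlex : max a₀ (x - ε) ≤ x := max_le hxa (by linarith)
          have hgex : x - ε ≤ max a₀ (x - ε) := le_max_right _ _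
          exact abs_le.mpr ⟨by linarith, by linarith⟩
    refine ⟨hAεmeas, φ, hφmeas, ?_, ?_⟩
    · intro x
      by_cases hx : x ∈ Aε
      · exact (key x hx).2
      · have : φ x = x := by
          show (if x ∈ Aε then (if x < a₀ then min a₀ (x + ε) else max a₀ (x - ε)) else x) = x
          rw [if_neg hx]
        rw [this]; simpa using hε.le
    · intro x
      constructor
      · intro hφA
        by_contra hx
        have hid : φ x = x := by
          show (if x ∈ Aε then (if x < a₀ then min a₀ (x + ε) else max a₀ (x - ε)) else x) = x
          rw [if_neg hx]
        exact hx ⟨φ x, hφA, by rw [hid]; simpa using hε.le⟩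
      · exact fun hx => (key x hx).1

theorem stmt17 {Ω : Type*} [MeasurableSpace Ω] (P : Measure Ω) [IsProbabilityMeasure P]
    (hPatomless : Atomless P)
    (X : Ω → ℝ) (hXmeas : Measurable X) (hXbdd : MemLp X ⊤ P)
    (ε : ℝ) (hε : 0 < ε)
    (A : Set ℝ) (hA : IsCompact A ∨ A.OrdConnected) :
    MeasurableSet {x : ℝ | ∃ y ∈ A, |x - y| ≤ ε} ∧
    IsGreatest
      {v : ℝ | ∃ Y : Ω → ℝ, Measurable Y ∧ MemLp Y ⊤ P ∧
        eLpNorm (fun ω => Y ω - X ω) ⊤ P ≤ ENNReal.ofReal ε ∧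
        v = (P {ω | Y ω ∈ A}).toReal}
      ((P {ω | X ω ∈ {x : ℝ | ∃ y ∈ A, |x - y| ≤ ε}}).toReal) := by
  obtain ⟨hAεmeas, φ, hφmeas, hφdist, hφiff⟩ := aux_phi_stmt17 ε hε A hA
  refine ⟨hAεmeas, ?_, ?_⟩
  · -- membership: Y = φ ∘ X attains the supremum
    refine ⟨fun ω => φ (X ω), hφmeas.comp hXmeas, ?_, ?_, ?_⟩
    · have hdiff : MemLp (fun ω => φ (X ω) - X ω) ⊤ P :=
        memLp_top_of_bound ((hφmeas.comp hXmeas).sub hXmeas).aestronglyMeasurable ε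
          (Eventually.of_forall fun ω => by simpa using hφdist (X ω))
      have : (fun ω => φ (X ω)) = fun ω => X ω + (φ (X ω) - X ω) := by
        funext ω; ring
      rw [this]
      exact hXbdd.add hdiff
    · rw [eLpNorm_exponent_top]
      exact eLpNormEssSup_le_of_ae_bound
        (Eventually.of_forall fun ω => by simpa using hφdist (X ω))
    · have hset : {ω | φ (X ω) ∈ A} = {ω | X ω ∈ {x : ℝ | ∃ y ∈ A, |x - y| ≤ ε}} := by
        ext ω
        exact hφiff (X ω)
      rw [← hset]
  · -- upper bound
    rintro v ⟨Y, hYmeas, hYbdd, hYnorm, rfl⟩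
    have hae : ∀ᵐ ω ∂P, |Y ω - X ω| ≤ ε := by
      have h1 : ∀ᵐ ω ∂P, (‖Y ω - X ω‖₊ : ℝ≥0∞) ≤ eLpNormEssSup (fun ω => Y ω - X ω) P :=
        enorm_ae_le_eLpNormEssSup _ P
      rw [← eLpNorm_exponent_top] at h1
      filter_upwards [h1] with ω hω
      have h2 : (‖Y ω - X ω‖₊ : ℝ≥0∞) ≤ ENNReal.ofReal ε := le_trans hω hYnorm
      rw [← ENNReal.ofReal_coe_nnreal, coe_nnnorm, ENNReal.ofReal_le_ofReal_iff hε.le] at h2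
      simpa using h2
    have hsub : {ω | Y ω ∈ A} ≤ᵐ[P] {ω | X ω ∈ {x : ℝ | ∃ y ∈ A, |x - y| ≤ ε}} := by
      filter_upwards [hae] with ω hω hmem
      exact ⟨Y ω, hmem, by rw [abs_sub_comm]; exact hω⟩
    exact ENNReal.toReal_le_toReal (measure_ne_top P _) (measure_ne_top P _) |>.mpr
      (measure_mono_ae hsub)
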